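/- Let X, Y, W ∈ ℝ[t] with W ≠ 0, define U := X'·W − X·W' and V := Y'·W − Y·W'. Set w := deg W and r := max(deg X, deg Y), and assume w < r. Then the polynomial P̃ := U·(W·x − X) + V·(W·y − Y), viewed as a polynomial in t with coefficients in ℝ[x,y], has degree exactly 2r + w − 1 in t, and its coefficient of t^{2r+w−1} is the constant −(r − w)·c(W,w)·(c(X,r)² + c(Y,r)²), which is a nonzero real number. -/

import Mathlib

open Polynomial

/-- Lift a univariate real polynomial in `t` to a polynomial in `t` whose coefficients
are polynomials in the two variables `x, y`. -/
noncomputable def liftT (p : Polynomial ℝ) : Polynomial (MvPolynomial (Fin 2) ℝ) :=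
  p.map MvPolynomial.C

/-- `P̃ := U·(W·x − X) + V·(W·y − Y)`, viewed as a polynomial in `t` with
coefficients in `ℝ[x,y]` (where `x = X 0`, `y = X 1`). -/
noncomputable def Ptilde (X Y W U V : Polynomial ℝ) :
    Polynomial (MvPolynomial (Fin 2) ℝ) :=
  liftT U * (liftT W * Polynomial.C (MvPolynomial.X 0) - liftT X)
    + liftT V * (liftT W * Polynomial.C (MvPolynomial.X 1) - liftT Y)

lemma wron_coeff_zero (A B : Polynomial ℝ) {k : ℕ} (h : A.natDegree + B.natDegree ≤ k) :
    (derivative A * B - A * derivative B).coeff k = 0 := by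
  have h1 : (derivative A * B).coeff k = 0 := by
    rcases Nat.eq_zero_or_pos A.natDegree with h0 | h0
    · obtain ⟨c, rfl⟩ := Polynomial.natDegree_eq_zero.mp h0
      simp
    · apply coeff_eq_zero_of_natDegree_lt
      refine natDegree_mul_le.trans_lt ?_
      have := natDegree_derivative_le A
      omega
  have h2 : (A * derivative B).coeff k = 0 := by
    rcases Nat.eq_zero_or_pos B.natDegree with h0 | h0
    · obtain ⟨c, rfl⟩ := Polynomial.natDegree_eq_zero.mp h0
      simp
    · apply coeff_eq_zero_of_natDegree_lt
      refine natDegree_mul_le.trans_lt ?_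
      have := natDegree_derivative_le B
      omega
  simp [h1, h2]

lemma wron_coeff_top (A B : Polynomial ℝ) :
    (derivative A * B - A * derivative B).coeff (A.natDegree + B.natDegree - 1)
      = ((A.natDegree : ℝ) - (B.natDegree : ℝ)) * A.leadingCoeff * B.leadingCoeff := by
  have h1 : (derivative A * B).coeff (A.natDegree + B.natDegree - 1)
      = (A.natDegree : ℝ) * A.leadingCoeff * B.leadingCoeff := by
    rcases Nat.eq_zero_or_pos A.natDegree with h0 | h0
    · obtain ⟨c, rfl⟩ := Polynomial.natDegree_eq_zero.mp h0
      simp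
    · obtain ⟨a, ha⟩ : ∃ a, A.natDegree = a + 1 := ⟨A.natDegree - 1, by omega⟩
      have hk : A.natDegree + B.natDegree - 1 = a + B.natDegree := by omega
      rw [hk, coeff_mul_add_eq_of_natDegree_le ((natDegree_derivative_le A).trans (by omega)) le_rfl,
        coeff_derivative]
      rw [← ha]
      simp only [coeff_natDegree]
      rw [ha]
      push_cast
      ring
  have h2 : (A * derivative B).coeff (A.natDegree + B.natDegree - 1)
      = (B.natDegree : ℝ) * A.leadingCoeff * B.leadingCoeff := by
    rcases Nat.eq_zero_or_pos B.natDegree with h0 | h0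
    · obtain ⟨c, rfl⟩ := Polynomial.natDegree_eq_zero.mp h0
      simp
    · obtain ⟨b, hb⟩ : ∃ b, B.natDegree = b + 1 := ⟨B.natDegree - 1, by omega⟩
      have hk : A.natDegree + B.natDegree - 1 = A.natDegree + b := by omega
      rw [hk, coeff_mul_add_eq_of_natDegree_le le_rfl ((natDegree_derivative_le B).trans (by omega)),
        coeff_derivative]
      rw [← hb]
      simp only [coeff_natDegree]
      rw [hb]
      push_cast
      ring
  rw [coeff_sub, h1, h2]
  ring

theorem stmt3 (X Y W U V : Polynomial ℝ) (hW : W ≠ 0)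
    (hU : U = Polynomial.derivative X * W - X * Polynomial.derivative W)
    (hV : V = Polynomial.derivative Y * W - Y * Polynomial.derivative W)
    (w r : ℕ) (hw : w = W.natDegree) (hr : r = max X.natDegree Y.natDegree)
    (hwr : w < r) :
    (Ptilde X Y W U V).natDegree = 2 * r + w - 1 ∧
    (Ptilde X Y W U V).coeff (2 * r + w - 1) =
      MvPolynomial.C (-(((r : ℝ) - (w : ℝ)) * W.coeff w *
        ((X.coeff r) ^ 2 + (Y.coeff r) ^ 2))) ∧
    -(((r : ℝ) - (w : ℝ)) * W.coeff w * ((X.coeff r) ^ 2 + (Y.coeff r) ^ 2)) ≠ 0 := by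
  set N := 2 * r + w - 1 with hN
  have hXle : X.natDegree ≤ r := hr ▸ le_max_left _ _
  have hYle : Y.natDegree ≤ r := hr ▸ le_max_right _ _
  have hr1 : 1 ≤ r := by omega
  -- degree bounds for U, V
  have hUle : U.natDegree ≤ X.natDegree + w - 1 := by
    rw [natDegree_le_iff_coeff_eq_zero]
    intro k hk
    rw [hU, hw] at *
    exact wron_coeff_zero X W (by omega)
  have hVle : V.natDegree ≤ Y.natDegree + w - 1 := by
    rw [natDegree_le_iff_coeff_eq_zero]
    intro k hk
    rw [hV, hw] at *
    exact wron_coeff_zero Y W (by omega)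
  -- (U*W) and (V*W) vanish from degree N on
  have hUW : ∀ k, N ≤ k → (U * W).coeff k = 0 := by
    intro k hk
    apply coeff_eq_zero_of_natDegree_lt
    refine natDegree_mul_le.trans_lt ?_
    rw [← hw]; omega
  have hVW : ∀ k, N ≤ k → (V * W).coeff k = 0 := by
    intro k hk
    apply coeff_eq_zero_of_natDegree_lt
    refine natDegree_mul_le.trans_lt ?_
    rw [← hw]; omega
  -- (U*X) and (V*Y) have degree ≤ N
  have hUXle : (U * X).natDegree ≤ N := natDegree_mul_le.trans (by omega)
  have hVYle : (V * Y).natDegree ≤ N := natDegree_mul_le.trans (by omega)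
  -- top coefficients
  have hUXtop : (U * X).coeff N =
      ((r : ℝ) - (w : ℝ)) * W.coeff w * (X.coeff r) ^ 2 := by
    by_cases hdX : X.natDegree = r
    · have hsplit : N = (X.natDegree + w - 1) + X.natDegree := by omega
      rw [hsplit, coeff_mul_add_eq_of_natDegree_le hUle le_rfl, hU, hw,
        wron_coeff_top X W]
      rw [← hw]
      rw [Polynomial.leadingCoeff, Polynomial.leadingCoeff, hdX, ← hw]
      ring
    · have hdX' : X.natDegree < r := lt_of_le_of_ne hXle hdX
      have h1 : (U * X).coeff N = 0 := by
        apply coeff_eq_zero_of_natDegree_lt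
        refine natDegree_mul_le.trans_lt ?_
        omega
      have h2 : X.coeff r = 0 := coeff_eq_zero_of_natDegree_lt hdX'
      rw [h1, h2]; ring
  have hVYtop : (V * Y).coeff N =
      ((r : ℝ) - (w : ℝ)) * W.coeff w * (Y.coeff r) ^ 2 := by
    by_cases hdY : Y.natDegree = r
    · have hsplit : N = (Y.natDegree + w - 1) + Y.natDegree := by omega
      rw [hsplit, coeff_mul_add_eq_of_natDegree_le hVle le_rfl, hV, hw,
        wron_coeff_top Y W]
      rw [← hw]
      rw [Polynomial.leadingCoeff, Polynomial.leadingCoeff, hdY, ← hw]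
      ring
    · have hdY' : Y.natDegree < r := lt_of_le_of_ne hYle hdY
      have h1 : (V * Y).coeff N = 0 := by
        apply coeff_eq_zero_of_natDegree_lt
        refine natDegree_mul_le.trans_lt ?_
        omega
      have h2 : Y.coeff r = 0 := coeff_eq_zero_of_natDegree_lt hdY'
      rw [h1, h2]; ring
  -- coefficient formula for Ptilde
  have hco : ∀ k, (Ptilde X Y W U V).coeff k =
      MvPolynomial.C ((U * W).coeff k) * MvPolynomial.X 0
        + MvPolynomial.C ((V * W).coeff k) * MvPolynomial.X 1
        - MvPolynomial.C ((U * X).coeff k + (V * Y).coeff k) := by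
    intro k
    have hmul : ∀ p q : Polynomial ℝ, liftT (p * q) = liftT p * liftT q := fun p q =>
      Polynomial.map_mul _
    rw [Ptilde, mul_sub, mul_sub, ← mul_assoc, ← mul_assoc, ← hmul, ← hmul, ← hmul, ← hmul]
    simp only [coeff_add, coeff_sub, Polynomial.coeff_mul_C, liftT, Polynomial.coeff_map,
      map_add]
    ring
  -- the coefficient at N
  have hcoN : (Ptilde X Y W U V).coeff N =
      MvPolynomial.C (-(((r : ℝ) - (w : ℝ)) * W.coeff w *
        ((X.coeff r) ^ 2 + (Y.coeff r) ^ 2))) := by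
    rw [hco N, hUW N le_rfl, hVW N le_rfl, hUXtop, hVYtop]
    rw [map_neg, map_add]
    simp [map_zero]
    ring
  -- nonvanishing of the constant
  have hcW : W.coeff w ≠ 0 := by
    rw [hw, Polynomial.coeff_natDegree]
    exact Polynomial.leadingCoeff_ne_zero.mpr hW
  have hsum : 0 < (X.coeff r) ^ 2 + (Y.coeff r) ^ 2 := by
    rcases max_choice X.natDegree Y.natDegree with h | h
    · have hdX : X.natDegree = r := by omega
      have hX0 : X ≠ 0 := by
        intro h0
        rw [h0, Polynomial.natDegree_zero] at hdX
        omega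
      have : X.coeff r ≠ 0 := by
        rw [← hdX, Polynomial.coeff_natDegree]
        exact Polynomial.leadingCoeff_ne_zero.mpr hX0
      positivity
    · have hdY : Y.natDegree = r := by omega
      have hY0 : Y ≠ 0 := by
        intro h0
        rw [h0, Polynomial.natDegree_zero] at hdY
        omega
      have : Y.coeff r ≠ 0 := by
        rw [← hdY, Polynomial.coeff_natDegree]
        exact Polynomial.leadingCoeff_ne_zero.mpr hY0
      positivity
  have hrw : (0 : ℝ) < (r : ℝ) - (w : ℝ) := by
    rw [sub_pos]
    exact_mod_cast hwr
  have hne : -(((r : ℝ) - (w : ℝ)) * W.coeff w *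
      ((X.coeff r) ^ 2 + (Y.coeff r) ^ 2)) ≠ 0 := by
    rw [neg_ne_zero]
    exact mul_ne_zero (mul_ne_zero (ne_of_gt hrw) hcW) (ne_of_gt hsum)
  have hle : (Ptilde X Y W U V).natDegree ≤ N := by
    rw [natDegree_le_iff_coeff_eq_zero]
    intro k hk
    rw [hco k, hUW k hk.le, hVW k hk.le,
      coeff_eq_zero_of_natDegree_lt (hUXle.trans_lt hk),
      coeff_eq_zero_of_natDegree_lt (hVYle.trans_lt hk)]
    simp
  have hge : N ≤ (Ptilde X Y W U V).natDegree := by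
    apply le_natDegree_of_ne_zero
    rw [hcoN]
    exact MvPolynomial.C_eq_zero.not.mpr hne
  exact ⟨le_antisymm hle hge, hcoN, hne⟩
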